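/- Let A be an n×n real diagonal matrix with Frobenius norm ‖A‖ = 1, and let B be a real symmetric n×n matrix. Let ‖B‖_∞ = max_{i,j} |b_{ij}|. Then ‖[A,B]‖² ≤ ‖B‖² + 2‖B‖_∞². -/
import Mathlib

private lemma cs_ineq (x y di dj : ℝ) (hdi : 0 < di) (hdj : 0 < dj) :
    (x - y)^2 ≤ (di + dj) * (x^2/di + y^2/dj) := by
  rw [div_add_div _ _ (ne_of_gt hdi) (ne_of_gt hdj), ← mul_div_assoc,
    le_div_iff₀ (mul_pos hdi hdj)]
  nlinarith [sq_nonneg (x*dj + y*di)]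

private lemma aux_main (n : ℕ) (a : Fin n → ℝ) (ha : ∑ i, (a i)^2 = 1)
    (m : Fin n → Fin n → ℝ) (hnn : ∀ i j, 0 ≤ m i j)
    (hsym : ∀ i j, m i j = m j i) (hdiag : ∀ i, m i i = 0)
    (c2 : ℝ) (hle : ∀ i j, m i j ≤ c2) :
    ∑ i, ∑ j, m i j * (a i - a j)^2 ≤ (∑ i, ∑ j, m i j) + 2 * c2 := by
  classical
  rcases Nat.eq_zero_or_pos n with hn | hn
  · subst hn; simp at ha
  set d : Fin n → ℝ := fun i => ∑ j, m i j with hd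
  set S : ℝ := ∑ i, ∑ j, m i j with hS
  have hdnn : ∀ i, 0 ≤ d i := fun i => Finset.sum_nonneg fun j _ => hnn i j
  have hSd : S = ∑ i, d i := rfl
  have hc2 : 0 ≤ c2 := le_trans (le_of_eq (hdiag ⟨0, hn⟩).symm) (hle _ _)
  have hcol : ∀ j, ∑ i, m i j = d j := fun j => by
    simp only [hd]; exact Finset.sum_congr rfl fun i _ => hsym i j
  have hdge : ∀ i j, m i j ≤ d i := fun i j =>
    Finset.single_le_sum (fun k _ => hnn i k) (Finset.mem_univ j)
  have hSnn : 0 ≤ S := Finset.sum_nonneg fun i _ => hdnn i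
  set K : ℝ := (S + 2*c2)/2 with hK
  have hKnn : 0 ≤ K := by rw [hK]; positivity
  -- counting lemma
  have hcount : ∀ u v : Fin n, u ≠ v → 2*(d u + d v) ≤ S + 2 * m u v := by
    intro u v huv
    have hvmem : v ∈ Finset.univ.erase u :=
      Finset.mem_erase.mpr ⟨huv.symm, Finset.mem_univ v⟩
    have humem : u ∈ Finset.univ.erase v :=
      Finset.mem_erase.mpr ⟨huv, Finset.mem_univ u⟩
    set E : Finset (Fin n) := (Finset.univ.erase u).erase v with hE
    have hEeq : E = (Finset.univ.erase v).erase u := by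
      ext x; simp only [Finset.mem_erase, Finset.mem_univ, and_true, hE]; tauto
    have A1 : ∑ i ∈ Finset.univ.erase u, d i + d u = ∑ i, d i :=
      Finset.sum_erase_add _ _ (Finset.mem_univ u)
    have A2 : ∑ i ∈ E, d i + d v = ∑ i ∈ Finset.univ.erase u, d i :=
      Finset.sum_erase_add _ _ hvmem
    have A3 : ∑ i ∈ E, m i u + m v u = ∑ i ∈ Finset.univ.erase u, m i u :=
      Finset.sum_erase_add _ _ hvmem
    have A4 : ∑ i ∈ Finset.univ.erase u, m i u + m u u = ∑ i, m i u :=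
      Finset.sum_erase_add _ _ (Finset.mem_univ u)
    have A5 : ∑ i ∈ E, m i v + m u v = ∑ i ∈ Finset.univ.erase v, m i v := by
      rw [hEeq]; exact Finset.sum_erase_add _ _ humem
    have A6 : ∑ i ∈ Finset.univ.erase v, m i v + m v v = ∑ i, m i v :=
      Finset.sum_erase_add _ _ (Finset.mem_univ v)
    have B1 : ∑ i ∈ E, (m i u + m i v) ≤ ∑ i ∈ E, d i := by
      apply Finset.sum_le_sum
      intro i hi
      have hiv : i ≠ v := (Finset.mem_erase.mp hi).1
      have hiu : i ≠ u := (Finset.mem_erase.mp (Finset.mem_erase.mp hi).2).1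
      have : ∑ j ∈ ({u, v} : Finset (Fin n)), m i j ≤ d i := by
        apply Finset.sum_le_sum_of_subset_of_nonneg (Finset.subset_univ _)
        intro j _ _; exact hnn i j
      rwa [Finset.sum_pair huv] at this
    have B2 : ∑ i ∈ E, (m i u + m i v) = ∑ i ∈ E, m i u + ∑ i ∈ E, m i v :=
      Finset.sum_add_distrib
    have C1 : ∑ i, m i u = d u := hcol u
    have C2 : ∑ i, m i v = d v := hcol v
    have C3 : m u u = 0 := hdiag u
    have C4 : m v v = 0 := hdiag v
    have C5 : m v u = m u v := hsym v u
    have hSsum : S = ∑ i, d i := hSd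
    linarith
  -- pointwise bound
  have hpt : ∀ i j, m i j * (a i - a j)^2 ≤
      K * (m i j * ((a i)^2 / d i) + m i j * ((a j)^2 / d j)) := by
    intro i j
    rcases eq_or_lt_of_le (hnn i j) with h0 | h0
    · rw [← h0]; simp
    · have hij : i ≠ j := by
        rintro rfl; rw [hdiag i] at h0; exact lt_irrefl 0 h0
      have hdi : 0 < d i := lt_of_lt_of_le h0 (hdge i j)
      have hdj : 0 < d j := lt_of_lt_of_le h0 ((hsym i j).le.trans (hdge j i))
      have hcs := cs_ineq (a i) (a j) (d i) (d j) hdi hdj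
      have hdK : d i + d j ≤ K := by
        have h1 := hcount i j hij
        have h2 := hle i j
        rw [hK]; linarith
      have hXnn : 0 ≤ (a i)^2/(d i) + (a j)^2/(d j) := by positivity
      calc m i j * (a i - a j)^2
          ≤ m i j * ((d i + d j) * ((a i)^2/d i + (a j)^2/d j)) :=
            mul_le_mul_of_nonneg_left hcs (le_of_lt h0)
        _ ≤ m i j * (K * ((a i)^2/d i + (a j)^2/d j)) :=
            mul_le_mul_of_nonneg_left (mul_le_mul_of_nonneg_right hdK hXnn) (le_of_lt h0)
        _ = K * (m i j * ((a i)^2 / d i) + m i j * ((a j)^2 / d j)) := by ring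
  -- sum everything
  have hsum1 : ∀ i, ∑ j, m i j * ((a i)^2 / d i) = (a i)^2 / d i * d i := by
    intro i
    rw [← Finset.sum_mul]
    exact mul_comm _ _
  have hsum2 : ∑ i, ∑ j, m i j * ((a j)^2 / d j) = ∑ j, (a j)^2 / d j * d j := by
    rw [Finset.sum_comm]
    apply Finset.sum_congr rfl
    intro j _
    rw [← Finset.sum_mul, hcol j]
    exact mul_comm _ _
  have hud : ∀ i, (a i)^2 / d i * d i ≤ (a i)^2 := by
    intro i
    rcases eq_or_lt_of_le (hdnn i) with h | h
    · rw [← h]; simp [sq_nonneg]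
    · rw [div_mul_cancel₀ _ (ne_of_gt h)]
  calc ∑ i, ∑ j, m i j * (a i - a j)^2
      ≤ ∑ i, ∑ j, K * (m i j * ((a i)^2 / d i) + m i j * ((a j)^2 / d j)) := by
        apply Finset.sum_le_sum; intro i _
        apply Finset.sum_le_sum; intro j _
        exact hpt i j
    _ = K * ((∑ i, (a i)^2 / d i * d i) + (∑ j, (a j)^2 / d j * d j)) := by
        simp only [← Finset.mul_sum]
        congr 1
        rw [← Finset.sum_add_distrib]
        simp only [Finset.sum_add_distrib]
        rw [hsum2]
        congr 1
        exact Finset.sum_congr rfl fun i _ => hsum1 i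
    _ ≤ K * (1 + 1) := by
        apply mul_le_mul_of_nonneg_left _ hKnn
        have t1 : ∑ i, (a i)^2 / d i * d i ≤ 1 := by
          rw [← ha]; exact Finset.sum_le_sum fun i _ => hud i
        have t2 : ∑ j, (a j)^2 / d j * d j ≤ 1 := by
          rw [← ha]; exact Finset.sum_le_sum fun j _ => hud j
        linarith
    _ = S + 2*c2 := by rw [hK]; ring

theorem stmt_7 (n : ℕ)
    (A : Matrix (Fin n) (Fin n) ℝ) (hA : A.IsDiag)
    (hAnorm : ∑ i, ∑ j, (A i j) ^ 2 = 1)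
    (B : Matrix (Fin n) (Fin n) ℝ) (hB : B.IsSymm) :
    ∑ i, ∑ j, ((A * B - B * A) i j) ^ 2 ≤
      (∑ i, ∑ j, (B i j) ^ 2) +
        2 * (sSup {x : ℝ | ∃ i j : Fin n, x = |B i j|}) ^ 2 := by
  classical
  set c : ℝ := sSup {x : ℝ | ∃ i j : Fin n, x = |B i j|} with hc
  have hbdd : BddAbove {x : ℝ | ∃ i j : Fin n, x = |B i j|} := by
    apply Set.Finite.bddAbove
    have hsub : {x : ℝ | ∃ i j : Fin n, x = |B i j|} ⊆
        Set.range (fun p : Fin n × Fin n => |B p.1 p.2|) := by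
      rintro x ⟨i, j, rfl⟩; exact ⟨(i, j), rfl⟩
    exact (Set.finite_range _).subset hsub
  have hcge : ∀ i j, |B i j| ≤ c := fun i j => le_csSup hbdd ⟨i, j, rfl⟩
  set a : Fin n → ℝ := fun i => A i i with ha
  set m : Fin n → Fin n → ℝ := fun i j => if i = j then 0 else (B i j)^2 with hm
  have hBs : ∀ i j, B j i = B i j := fun i j => hB.apply i j
  have hnn : ∀ i j, 0 ≤ m i j := by
    intro i j; by_cases h : i = j <;> simp [hm, h, sq_nonneg]
  have hsym : ∀ i j, m i j = m j i := by
    intro i j; by_cases h : i = j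
    · subst h; rfl
    · simp only [hm, if_neg h, if_neg (Ne.symm h)]
      rw [hBs i j]
  have hdiag : ∀ i, m i i = 0 := by intro i; simp [hm]
  have hle : ∀ i j, m i j ≤ c^2 := by
    intro i j; by_cases h : i = j
    · simp [hm, h, sq_nonneg]
    · simp only [hm, if_neg h]
      have h1 := hcge i j
      calc (B i j)^2 = |B i j|^2 := (sq_abs _).symm
        _ ≤ c^2 := pow_le_pow_left₀ (abs_nonneg _) h1 2
  have hanorm : ∑ i, (a i)^2 = 1 := by
    rw [← hAnorm]
    apply Finset.sum_congr rfl
    intro i _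
    rw [Finset.sum_eq_single i]
    · intro j _ hj
      rw [hA (Ne.symm hj)]
      ring
    · intro h; exact absurd (Finset.mem_univ i) h
  have key := aux_main n a hanorm m hnn hsym hdiag (c^2) hle
  have hcomm : ∀ i j, (A * B - B * A) i j = (a i - a j) * B i j := by
    intro i j
    rw [Matrix.sub_apply, Matrix.mul_apply, Matrix.mul_apply]
    rw [Finset.sum_eq_single i (fun k _ hk => by rw [hA (Ne.symm hk), zero_mul])
      (fun h => absurd (Finset.mem_univ i) h)]
    rw [Finset.sum_eq_single j (fun k _ hk => by rw [hA hk, mul_zero])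
      (fun h => absurd (Finset.mem_univ j) h)]
    ring
  have hterm : ∀ i j, ((A * B - B * A) i j)^2 = m i j * (a i - a j)^2 := by
    intro i j
    rw [hcomm]
    by_cases h : i = j
    · subst h; simp [hm]
    · simp only [hm, if_neg h]; ring
  have hLHS : ∑ i, ∑ j, ((A * B - B * A) i j)^2 = ∑ i, ∑ j, m i j * (a i - a j)^2 :=
    Finset.sum_congr rfl fun i _ => Finset.sum_congr rfl fun j _ => hterm i j
  rw [hLHS]
  refine le_trans key ?_
  have hmB : ∑ i, ∑ j, m i j ≤ ∑ i, ∑ j, (B i j)^2 := by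
    apply Finset.sum_le_sum; intro i _
    apply Finset.sum_le_sum; intro j _
    by_cases h : i = j <;> simp [hm, h, sq_nonneg]
  linarith
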